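/- There exists a zero-dimensional scattered separable metrizable space that is σ-homogeneous (a countable union of homogeneous subspaces) but not ℓ-homogeneous for any finite ℓ; a witness is the ordinal ω^ω equipped with the order topology. -/

import Mathlib

open TopologicalSpace MeasureTheory Topology

/-- A space is *homogeneous* if its homeomorphism group acts transitively. -/
def HomogeneousSpace (X : Type*) [TopologicalSpace X] : Prop :=
  ∀ x y : X, ∃ h : X ≃ₜ X, h x = y

/-- A subset is a *homogeneous subspace* if it is homogeneous in the subspace topology. -/
def HomogeneousSubspace {X : Type*} [TopologicalSpace X] (S : Set X) : Prop :=
  ∀ x y : S, ∃ h : ↥S ≃ₜ ↥S, h x = y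

/-- A space is *zero-dimensional* if the clopen sets form a base. -/
def ZeroDimensionalSpace (X : Type*) [TopologicalSpace X] : Prop :=
  IsTopologicalBasis {s : Set X | IsClopen s}

/-- A space is *analytic* if it embeds onto an analytic subset of some Polish space. -/
def AnalyticSpace (X : Type*) [tX : TopologicalSpace X] : Prop :=
  ∃ (Z : Type) (tZ : TopologicalSpace Z), @PolishSpace Z tZ ∧
    ∃ j : X → Z, @IsEmbedding X Z tX tZ j ∧ @AnalyticSet Z tZ (Set.range j)

/-- A space is *coanalytic* if it embeds onto the complement of an analytic subset of some
Polish space. -/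
def CoanalyticSpace (X : Type*) [tX : TopologicalSpace X] : Prop :=
  ∃ (Z : Type) (tZ : TopologicalSpace Z), @PolishSpace Z tZ ∧
    ∃ j : X → Z, @IsEmbedding X Z tX tZ j ∧ @AnalyticSet Z tZ (Set.range j)ᶜ

/-- A space is *Borel* if it embeds onto a Borel subset of some Polish space. -/
def BorelSpacePaper (X : Type*) [tX : TopologicalSpace X] : Prop :=
  ∃ (Z : Type) (tZ : TopologicalSpace Z), @PolishSpace Z tZ ∧
    ∃ j : X → Z, @IsEmbedding X Z tX tZ j ∧ @MeasurableSet Z (@borel Z tZ) (Set.range j)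

/-- `A ∈ Σ¹₁(X)`: for some embedding `j` of `X` into a Polish space `Z`, `j '' A` is the
trace on `j '' X` of an analytic subset of `Z`. -/
def RelativelyAnalytic {X : Type*} [tX : TopologicalSpace X] (A : Set X) : Prop :=
  ∃ (Z : Type) (tZ : TopologicalSpace Z), @PolishSpace Z tZ ∧
    ∃ j : X → Z, @IsEmbedding X Z tX tZ j ∧
      ∃ A' : Set Z, @AnalyticSet Z tZ A' ∧ j '' A = A' ∩ Set.range j

/-- A subset of a space is `Σ¹₂` if it is a continuous image of a coanalytic subset of a
Polish space. -/
def Sigma12Set {Z : Type*} [tZ : TopologicalSpace Z] (s : Set Z) : Prop :=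
  ∃ (W : Type) (tW : TopologicalSpace W), @PolishSpace W tW ∧
    ∃ (C : Set W) (f : W → Z), @AnalyticSet W tW Cᶜ ∧ @ContinuousOn W Z tW tZ f C ∧ f '' C = s

/-- `A ∈ Δ¹₂(X)`: for some embedding `j` of `X` into a Polish space `Z`, both `j '' A` and
`j '' Aᶜ` are traces on `j '' X` of `Σ¹₂` subsets of `Z`. -/
def RelativelyDelta12 {X : Type*} [tX : TopologicalSpace X] (A : Set X) : Prop :=
  ∃ (Z : Type) (tZ : TopologicalSpace Z), @PolishSpace Z tZ ∧
    ∃ j : X → Z, @IsEmbedding X Z tX tZ j ∧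
      (∃ A' : Set Z, @Sigma12Set Z tZ A' ∧ j '' A = A' ∩ Set.range j) ∧
      (∃ B' : Set Z, @Sigma12Set Z tZ B' ∧ j '' Aᶜ = B' ∩ Set.range j)

/-- A space is *meager* if it is a meager subset of itself. -/
def MeagerSpace (X : Type*) [TopologicalSpace X] : Prop :=
  IsMeagre (Set.univ : Set X)

/-- A space is *Baire* if no non-empty open subset of it is meager (the definition used in
the paper). -/
def PaperBaireSpace (X : Type*) [TopologicalSpace X] : Prop :=
  ∀ U : Set X, IsOpen U → U.Nonempty → ¬ IsMeagre U

/-- A space is *nowhere countable* if it is non-empty and no non-empty open subset of it is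
countable. -/
def NowhereCountable (X : Type*) [TopologicalSpace X] : Prop :=
  Nonempty X ∧ ∀ U : Set X, IsOpen U → U.Nonempty → ¬ U.Countable

/-- The iterated Cantor–Bendixson derivative of a space: `cbDeriv X 0 = X`,
`cbDeriv X (ξ+1)` is `cbDeriv X ξ` minus its isolated points, and intersections are taken
at limit stages. -/
noncomputable def cbDeriv (X : Type*) [TopologicalSpace X] (o : Ordinal.{0}) : Set X :=
  Ordinal.limitRecOn o Set.univ
    (fun _ ih => {x ∈ ih | x ∈ closure (ih \ {x})})
    (fun o _ ih => ⋂ (p : Set.Iio o), ih p.1 p.2)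

/-- A space is *scattered* if some iterated Cantor–Bendixson derivative of it is empty. -/
def ScatteredSpace (X : Type*) [TopologicalSpace X] : Prop :=
  ∃ o : Ordinal.{0}, cbDeriv X o = ∅

/-- A space is *n-discrete* if it is the union of `n` discrete subspaces. -/
def NDiscrete (n : ℕ) (X : Type*) [TopologicalSpace X] : Prop :=
  ∃ D : Fin n → Set X, (∀ k, DiscreteTopology ↥(D k)) ∧ ⋃ k, D k = Set.univ

/-- A space is *n-homogeneous* if it is the union of `n` homogeneous subspaces. -/
def NHomogeneous (n : ℕ) (X : Type*) [TopologicalSpace X] : Prop :=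
  ∃ Y : Fin n → Set X, (∀ k, HomogeneousSubspace (Y k)) ∧ ⋃ k, Y k = Set.univ

/-- A space is *σ-homogeneous* if it is the union of countably many homogeneous
subspaces. -/
def SigmaHomogeneous (X : Type*) [TopologicalSpace X] : Prop :=
  ∃ Y : ℕ → Set X, (∀ n, HomogeneousSubspace (Y n)) ∧ ⋃ n, Y n = Set.univ

/-- An `Fσ` subset: a countable union of closed sets. -/
def IsFsigma {X : Type*} [TopologicalSpace X] (s : Set X) : Prop :=
  ∃ F : ℕ → Set X, (∀ n, IsClosed (F n)) ∧ s = ⋃ n, F n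


section DerTheory

open Set

variable {X : Type*} [TopologicalSpace X]

/-- relative derived set -/
def der (S : Set X) : Set X := {x ∈ S | x ∈ closure (S \ {x})}

lemma der_subset (S : Set X) : der S ⊆ S := fun _ h => h.1

lemma der_mono {S T : Set X} (h : S ⊆ T) : der S ⊆ der T := by
  intro x hx
  exact ⟨h hx.1, closure_mono (diff_subset_diff_left h) hx.2⟩

lemma der_inter_open {S U : Set X} (hU : IsOpen U) : der S ∩ U ⊆ der (S ∩ U) := by
  rintro x ⟨⟨hxS, hxc⟩, hxU⟩
  refine ⟨⟨hxS, hxU⟩, ?_⟩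
  have : x ∈ U ∩ closure (S \ {x}) := ⟨hxU, hxc⟩
  have := hU.inter_closure this
  refine closure_mono ?_ this
  rintro y ⟨hyU, hyS, hyx⟩; exact ⟨⟨hyS, hyU⟩, hyx⟩

lemma der_diff_singleton [T1Space X] {S : Set X} (x : X) :
    der S \ {x} ⊆ der (S \ {x}) := by
  rintro y ⟨⟨hyS, hyc⟩, hyx⟩
  simp only [mem_singleton_iff] at hyx
  refine ⟨⟨hyS, hyx⟩, ?_⟩
  have hsub : S \ {y} ⊆ (S \ {x}) \ {y} ∪ {x} := by
    rintro z ⟨hzS, hzy⟩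
    by_cases hzx : z = x
    · exact Or.inr hzx
    · exact Or.inl ⟨⟨hzS, hzx⟩, hzy⟩
  have := closure_mono hsub hyc
  rw [closure_union, closure_singleton] at this
  rcases this with h | h
  · exact h
  · exact absurd h hyx

lemma der_iter_subset (S : Set X) (m : ℕ) : der^[m] S ⊆ S := by
  induction m with
  | zero => exact subset_rfl
  | succ m ih => rw [Function.iterate_succ_apply']; exact (der_subset _).trans ih

lemma der_iter_mono {S T : Set X} (h : S ⊆ T) (m : ℕ) : der^[m] S ⊆ der^[m] T := by
  induction m generalizing S T with
  | zero => exact h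
  | succ m ih => rw [Function.iterate_succ_apply, Function.iterate_succ_apply]
                 exact ih (der_mono h)

lemma der_iter_inter_open {S U : Set X} (hU : IsOpen U) (m : ℕ) :
    der^[m] S ∩ U ⊆ der^[m] (S ∩ U) := by
  induction m generalizing S with
  | zero => exact subset_rfl
  | succ m ih =>
    rw [Function.iterate_succ_apply', Function.iterate_succ_apply']
    exact (der_inter_open hU).trans (der_mono ih)

lemma der_iter_diff_singleton [T1Space X] {S : Set X} (x : X) (m : ℕ) :
    der^[m] S \ {x} ⊆ der^[m] (S \ {x}) := by
  induction m generalizing S with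
  | zero => exact subset_rfl
  | succ m ih =>
    rw [Function.iterate_succ_apply', Function.iterate_succ_apply']
    exact (der_diff_singleton x).trans (der_mono ih)

/-- a cover by `m` pointwise-discrete sets kills the `m`-fold iterated derivative -/
theorem der_iter_empty_of_cover [T1Space X] :
    ∀ (m : ℕ) (C : Set X) (D : Fin m → Set X),
      (∀ k, ∀ x ∈ D k, ∃ U : Set X, IsOpen U ∧ x ∈ U ∧ U ∩ D k ⊆ {x}) →
      C ⊆ ⋃ k, D k → der^[m] C = ∅ := by
  intro m
  induction m with
  | zero =>
    intro C D _ hcov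
    simpa using subset_empty_iff.mp (by simpa using hcov)
  | succ m ih =>
    intro C D hD hcov
    by_contra hne
    obtain ⟨x, hx⟩ := nonempty_iff_ne_empty.mpr hne
    rw [Function.iterate_succ_apply'] at hx
    obtain ⟨hxm, hxc⟩ := hx
    have hxC : x ∈ C := der_iter_subset C m hxm
    obtain ⟨i, hxDi⟩ := mem_iUnion.mp (hcov hxC)
    obtain ⟨U, hUopen, hxU, hUDi⟩ := hD i x hxDi
    set C' := (C ∩ U) \ {x} with hC'
    have hcov' : C' ⊆ ⋃ k : Fin m, D (i.succAbove k) := by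
      rintro y ⟨⟨hyC, hyU⟩, hyx⟩
      obtain ⟨j, hyDj⟩ := mem_iUnion.mp (hcov hyC)
      have hji : j ≠ i := by
        rintro rfl
        exact hyx (hUDi ⟨hyU, hyDj⟩)
      obtain ⟨k, hk⟩ := Fin.exists_succAbove_eq hji
      exact mem_iUnion.mpr ⟨k, hk ▸ hyDj⟩
    have hder : der^[m] C' = ∅ :=
      ih C' (fun k => D (i.succAbove k)) (fun k => hD (i.succAbove k)) hcov'
    rw [mem_closure_iff] at hxc
    obtain ⟨y, hyU, hy⟩ := hxc U hUopen hxU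
    have : y ∈ der^[m] C' := by
      have h1 : y ∈ der^[m] (C ∩ U) := der_iter_inter_open hUopen m ⟨hy.1, hyU⟩
      exact der_iter_diff_singleton x m ⟨h1, hy.2⟩
    rw [hder] at this
    exact this

/-- an isolated-points characterization of discreteness of a subspace -/
lemma discreteTopology_subtype_iff_isol {S : Set X} :
    DiscreteTopology ↥S ↔ ∀ x ∈ S, ∃ U : Set X, IsOpen U ∧ x ∈ U ∧ U ∩ S ⊆ {x} := by
  constructor
  · intro h x hx
    have hop : IsOpen ({⟨x, hx⟩} : Set ↥S) := isOpen_discrete _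
    obtain ⟨t, htop, hteq⟩ := isOpen_induced_iff.mp hop
    refine ⟨t, htop, ?_, ?_⟩
    · have : (⟨x, hx⟩ : ↥S) ∈ (Subtype.val ⁻¹' t : Set ↥S) := by
        rw [hteq]; rfl
      exact this
    · rintro y ⟨hyt, hyS⟩
      have : (⟨y, hyS⟩ : ↥S) ∈ (Subtype.val ⁻¹' t : Set ↥S) := hyt
      rw [hteq] at this
      exact congrArg Subtype.val this
  · intro h
    rw [discreteTopology_iff_isOpen_singleton]
    rintro ⟨x, hx⟩
    obtain ⟨U, hUop, hxU, hUS⟩ := h x hx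
    rw [isOpen_induced_iff]
    refine ⟨U, hUop, ?_⟩
    ext ⟨y, hy⟩
    simp only [Set.mem_preimage, Set.mem_singleton_iff]
    constructor
    · intro hyU; exact Subtype.ext (hUS ⟨hyU, hy⟩)
    · intro h; cases h; exact hxU

end DerTheory

section OmegaPow

open Set Ordinal Order

universe u

noncomputable abbrev Om : Ordinal.{u} := Ordinal.omega0 ^ Ordinal.omega0
abbrev XXt : Type (u+1) := ↥(Set.Iio (Om.{u}))


lemma opow_nat_lt (n : ℕ) : (ω ^ (n : Ordinal.{u}) : Ordinal.{u}) < Om.{u} :=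
  (opow_lt_opow_iff_right one_lt_omega0).mpr (nat_lt_omega0 n)

lemma lt_Omega_iff {x : Ordinal.{u}} : x < Om.{u} ↔ ∃ n : ℕ, x < ω ^ (n : Ordinal.{u}) := by
  rw [lt_opow_of_isSuccLimit omega0_ne_zero isSuccLimit_omega0]
  constructor
  · rintro ⟨c, hc, hx⟩
    obtain ⟨n, rfl⟩ := lt_omega0.mp hc
    exact ⟨n, hx⟩
  · rintro ⟨n, hx⟩
    exact ⟨n, nat_lt_omega0 n, hx⟩

instance countable_XX : Countable XXt.{u} := by
  have h1 : ∀ n : ℕ, (Set.Iio (ω ^ (n : Ordinal.{u}))).Countable := by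
    intro n
    rw [← Set.countable_coe_iff, ← Cardinal.mk_le_aleph0_iff, Ordinal.mk_Iio_ordinal]
    have hcard : (ω ^ (n : Ordinal.{u})).card ≤ Cardinal.aleph0 := by
      induction n with
      | zero => simp
      | succ n ih =>
        have : ((n+1 : ℕ) : Ordinal.{u}) = succ (n : Ordinal.{u}) := by
          rw [Nat.cast_succ, add_one_eq_succ]
        rw [this, opow_succ, Ordinal.card_mul, card_omega0]
        calc (ω ^ (n : Ordinal.{u})).card * Cardinal.aleph0
            ≤ Cardinal.aleph0 * Cardinal.aleph0 :=
              mul_le_mul' ih le_rfl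
          _ = Cardinal.aleph0 := Cardinal.aleph0_mul_aleph0
    calc Cardinal.lift.{u+1} (ω ^ (n : Ordinal.{u})).card
        ≤ Cardinal.lift.{u+1} Cardinal.aleph0 := Cardinal.lift_le.mpr hcard
      _ = Cardinal.aleph0 := Cardinal.lift_aleph0
  have : (Set.Iio Om.{u}).Countable := by
    have : Set.Iio Om.{u} = ⋃ n : ℕ, Set.Iio (ω ^ (n : Ordinal.{u})) := by
      ext x
      simp only [Set.mem_Iio, Set.mem_iUnion]
      exact lt_Omega_iff
    rw [this]
    exact Set.countable_iUnion h1
  exact this.to_subtype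

/-- preimages in `XXt.{u}` of `Ioc a b` are clopen -/
lemma clopen_Ioc (a b : Ordinal.{u}) :
    IsClopen ((fun y : XXt.{u} => y.1) ⁻¹' (Set.Ioc a b)) := by
  have hclopen : IsClopen (Set.Ioc a b) := by
    constructor
    · have : Set.Ioc a b = Set.Icc (a+1) b := by
        ext y
        simp only [Set.mem_Ioc, Set.mem_Icc, add_one_eq_succ, succ_le_iff]
      rw [this]; exact isClosed_Icc
    · have : Set.Ioc a b = Set.Ioo a (b+1) := by
        ext y
        simp only [Set.mem_Ioc, Set.mem_Ioo, add_one_eq_succ, lt_succ_iff]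
      rw [this]; exact isOpen_Ioo
  exact hclopen.preimage continuous_subtype_val

lemma clopen_zero : IsClopen ({y : XXt.{u} | y.1 = 0}) := by
  have h0 : ({y : XXt.{u} | y.1 = 0}) = (fun y : XXt.{u} => y.1) ⁻¹' {0} := rfl
  rw [h0]
  refine IsClopen.preimage ⟨isClosed_singleton, ?_⟩ continuous_subtype_val
  exact Ordinal.isOpen_singleton_iff.mpr (fun h => (Order.IsSuccLimit.pos h).false)

lemma singleton_clopen {x : XXt.{u}} (hx : ¬ Order.IsSuccLimit x.1) : IsClopen ({x} : Set XXt.{u}) := by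
  have : ({x} : Set XXt.{u}) = (fun y : XXt.{u} => y.1) ⁻¹' {x.1} := by
    ext y
    simp [Subtype.ext_iff]
  rw [this]
  exact IsClopen.preimage ⟨isClosed_singleton, Ordinal.isOpen_singleton_iff.mpr hx⟩
    continuous_subtype_val

/-- basic clopen neighborhoods -/
lemma clopen_nbhd {x : XXt.{u}} {U : Set XXt.{u}} (hU : IsOpen U) (hxU : x ∈ U) :
    ∃ V : Set XXt.{u}, (V = {y : XXt.{u} | y.1 = 0} ∨
      ∃ a b : Ordinal.{u}, V = (fun y : XXt.{u} => y.1) ⁻¹' (Set.Ioc a b)) ∧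
      IsClopen V ∧ x ∈ V ∧ V ⊆ U := by
  rcases Ordinal.zero_or_succ_or_isSuccLimit x.1 with h0 | ⟨b, hb⟩ | hlim
  · refine ⟨{y : XXt.{u} | y.1 = 0}, Or.inl rfl, clopen_zero, h0, ?_⟩
    intro y hy
    have : y = x := Subtype.ext (show y.1 = x.1 by rw [hy, h0])
    rw [this]; exact hxU
  · replace hb := hb.symm
    refine ⟨(fun y : XXt.{u} => y.1) ⁻¹' (Set.Ioc b x.1), Or.inr ⟨b, x.1, rfl⟩,
      clopen_Ioc b x.1, ?_, ?_⟩
    · exact ⟨show b < x.1 by rw [hb]; exact lt_succ b, le_rfl⟩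
    · intro y hy
      have : y = x := by
        apply Subtype.ext
        have h1 : b < y.1 := hy.1
        have h2 : y.1 ≤ x.1 := hy.2
        rw [hb] at h2 ⊢
        exact le_antisymm h2 (succ_le_of_lt h1)
      rw [this]; exact hxU
  · obtain ⟨t, htop, hteq⟩ := isOpen_induced_iff.mp hU
    have hxt : x.1 ∈ t := by rw [← hteq] at hxU; exact hxU
    obtain ⟨a, ha, hsub⟩ := (Ordinal.isOpen_iff.mp htop) x.1 hxt hlim
    refine ⟨(fun y : XXt.{u} => y.1) ⁻¹' (Set.Ioc a x.1), Or.inr ⟨a, x.1, rfl⟩,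
      clopen_Ioc a x.1, ⟨ha, le_rfl⟩, ?_⟩
    intro y hy
    rcases lt_or_eq_of_le hy.2 with h | h
    · rw [← hteq]; exact hsub ⟨hy.1, h⟩
    · have : y = x := Subtype.ext h
      rw [this]; exact hxU

end OmegaPow

section Instances

open Set Ordinal Order TopologicalSpace

universe u

lemma zeroDim_XX : IsTopologicalBasis {s : Set XXt.{u} | IsClopen s} := by
  refine isTopologicalBasis_of_isOpen_of_nhds (fun u hu => hu.isOpen) ?_
  intro a u hau hu
  obtain ⟨V, _, hVclopen, haV, hVu⟩ := clopen_nbhd hu hau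
  exact ⟨V, hVclopen, haV, hVu⟩

instance secondCountable_XX : SecondCountableTopology XXt.{u} := by
  set B : Set (Set XXt.{u}) :=
    (Set.range fun p : XXt.{u} × XXt.{u} =>
      (fun y : XXt.{u} => y.1) ⁻¹' (Set.Ioc p.1.1 p.2.1)) ∪ {{y : XXt.{u} | y.1 = 0}} with hB
  have hbasis : IsTopologicalBasis B := by
    refine isTopologicalBasis_of_isOpen_of_nhds ?_ ?_
    · rintro s (⟨p, rfl⟩ | hs)
      · exact (clopen_Ioc p.1.1 p.2.1).isOpen
      · simp only [Set.mem_singleton_iff] at hs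
        rw [hs]; exact clopen_zero.isOpen
    · intro a u hau hu
      obtain ⟨V, hV, _, haV, hVu⟩ := clopen_nbhd hu hau
      rcases hV with h0 | ⟨c, d, hV⟩
      · exact ⟨V, Or.inr (by simp [h0]), haV, hVu⟩
      · -- c, d may lie outside Iio Ω; shrink
        by_cases hd : d < Om.{u}
        · by_cases hc : c < Om.{u}
          · refine ⟨V, Or.inl ⟨(⟨c, hc⟩, ⟨d, hd⟩), hV.symm⟩, haV, hVu⟩
          · -- c ≥ Ω: then V is empty, impossible since a ∈ V
            exfalso
            rw [hV] at haV
            exact hc (lt_of_le_of_lt (le_of_lt haV.1) a.2)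
        · -- d ≥ Ω: replace d by a
          push_neg at hd
          refine ⟨(fun y : XXt.{u} => y.1) ⁻¹' (Set.Ioc c a.1), ?_, ?_, ?_⟩
          · by_cases hc : c < Om.{u}
            · exact Or.inl ⟨(⟨c, hc⟩, a), rfl⟩
            · exfalso
              rw [hV] at haV
              exact hc (lt_of_le_of_lt (le_of_lt haV.1) a.2)
          · rw [hV] at haV
            exact ⟨haV.1, le_rfl⟩
          · intro y hy
            apply hVu
            rw [hV] at haV ⊢
            exact ⟨hy.1, le_trans hy.2 haV.2⟩
  refine hbasis.secondCountableTopology ?_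
  apply Set.Countable.union
  · exact Set.countable_range _
  · exact Set.countable_singleton _

instance metrizable_XX : MetrizableSpace XXt.{u} :=
  TopologicalSpace.metrizableSpace_of_t3_secondCountable _

instance separable_XX : SeparableSpace XXt.{u} := inferInstance

end Instances

section DivStructure

open Set Ordinal Order

universe u

/-- points whose value is a nonzero multiple of `ω ^ n` -/
def Pset (n : ℕ) : Set XXt.{u} := {x | ω ^ (n : Ordinal.{u}) ∣ x.1 ∧ x.1 ≠ 0}

/-- multiples of `ω ^ n` (including 0) -/
def Mset (n : ℕ) : Set XXt.{u} := {x | ω ^ (n : Ordinal.{u}) ∣ x.1}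

lemma Pset_subset_Mset (n : ℕ) : Pset.{u} n ⊆ Mset.{u} n := fun _ h => h.1

lemma Pset_succ_subset (n : ℕ) : Pset.{u} (n+1) ⊆ Pset.{u} n := by
  rintro x ⟨hdvd, hne⟩
  refine ⟨dvd_trans ?_ hdvd, hne⟩
  exact opow_dvd_opow ω (by exact_mod_cast Nat.le_succ n)

lemma omega_pow_succ (n : ℕ) :
    (ω : Ordinal.{u}) ^ ((n+1 : ℕ) : Ordinal.{u}) = ω ^ (n : Ordinal.{u}) * ω := by
  rw [Nat.cast_succ, add_one_eq_succ, opow_succ]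

/-- isolation: a point of `Mset n` that is not a multiple of `ω^(n+1)` is isolated
in `Mset n` -/
lemma iso_Mset {n : ℕ} {x : XXt.{u}} (h1 : ω ^ (n : Ordinal.{u}) ∣ x.1)
    (h2 : ¬ ω ^ ((n+1 : ℕ) : Ordinal.{u}) ∣ x.1) (h0 : x.1 ≠ 0) :
    ∃ U : Set XXt.{u}, IsOpen U ∧ x ∈ U ∧ U ∩ Mset.{u} n ⊆ {x} := by
  obtain ⟨c, hc⟩ := h1
  have hc0 : c ≠ 0 := by rintro rfl; simp at hc; exact h0 hc
  have hclim : ¬ Order.IsSuccLimit c := by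
    intro hlim
    obtain ⟨d, hd⟩ := (isSuccLimit_iff_omega0_dvd.mp hlim).2
    apply h2
    rw [omega_pow_succ, hc, hd]
    exact ⟨d, (mul_assoc _ _ _).symm⟩
  rcases Ordinal.zero_or_succ_or_isSuccLimit c with h | ⟨b, hb⟩ | h
  · exact absurd h hc0
  · -- c = b + 1
    replace hb := hb.symm
    refine ⟨(fun y : XXt.{u} => y.1) ⁻¹' (Set.Ioo (ω ^ (n : Ordinal.{u}) * b) (x.1 + 1)),
      (isOpen_Ioo).preimage continuous_subtype_val, ?_, ?_⟩
    · refine ⟨show ω ^ (n : Ordinal.{u}) * b < x.1 from ?_,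
        show x.1 < x.1 + 1 from by rw [add_one_eq_succ]; exact lt_succ _⟩
      rw [hc, hb]
      exact (mul_lt_mul_iff_right₀ (opow_pos _ omega0_pos)).mpr (lt_succ b)
    · rintro y ⟨⟨hy1, hy2⟩, s, hs⟩
      have hy1' : ω ^ (n : Ordinal.{u}) * b < y.1 := hy1
      have hy2' : y.1 < x.1 + 1 := hy2
      have hyx : y.1 ≤ x.1 := by
        rw [add_one_eq_succ] at hy2'
        exact lt_succ_iff.mp hy2'
      have hbs : b < s := by
        rw [hs] at hy1'
        exact (mul_lt_mul_iff_right₀ (opow_pos _ omega0_pos)).mp hy1'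
      have hsb : s ≤ succ b := by
        rw [hs, hc, hb] at hyx
        exact (mul_le_mul_iff_right₀ (opow_pos _ omega0_pos)).mp hyx
      have : s = succ b := le_antisymm hsb (succ_le_of_lt hbs)
      have : y.1 = x.1 := by rw [hs, this, hc, hb]
      exact Subtype.ext this
  · exact absurd h hclim

/-- the derived set of `Mset n` is contained in `Pset (n+1)` -/
lemma der_Mset (n : ℕ) : der (Mset.{u} n) ⊆ Pset.{u} (n+1) := by
  rintro x ⟨hxM, hxc⟩
  have h0 : x.1 ≠ 0 := by
    rintro h0
    -- x is isolated: singleton is open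
    have hop : IsOpen ({x} : Set XXt.{u}) :=
      (singleton_clopen (by rw [h0]; exact fun h => (Order.IsSuccLimit.pos h).false)).isOpen
    rw [mem_closure_iff] at hxc
    obtain ⟨y, hy1, _, hy3⟩ := hxc {x} hop rfl
    exact hy3 hy1
  by_cases h2 : ω ^ ((n+1 : ℕ) : Ordinal.{u}) ∣ x.1
  · exact ⟨h2, h0⟩
  · exfalso
    obtain ⟨U, hUop, hxU, hUM⟩ := iso_Mset hxM h2 h0
    rw [mem_closure_iff] at hxc
    obtain ⟨y, hyU, hyM, hyx⟩ := hxc U hUop hxU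
    exact hyx (hUM ⟨hyU, hyM⟩)

lemma der_iter_univ_subset (n : ℕ) :
    der^[n+1] (Set.univ : Set XXt.{u}) ⊆ Pset.{u} (n+1) := by
  induction n with
  | zero =>
    have huniv : (Set.univ : Set XXt.{u}) = Mset.{u} 0 := by
      ext x; simp [Mset]
    rw [Function.iterate_one, huniv]
    exact der_Mset 0
  | succ n ih =>
    rw [Function.iterate_succ_apply']
    calc der (der^[n+1] (Set.univ : Set XXt.{u}))
        ⊆ der (Pset.{u} (n+1)) := der_mono ih
      _ ⊆ der (Mset.{u} (n+1)) := der_mono (Pset_subset_Mset _)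
      _ ⊆ Pset.{u} (n+2) := der_Mset (n+1)

/-- every nonzero multiple of `ω^(n+1)` is a limit of smaller nonzero multiples
of `ω^n` -/
lemma Pset_succ_subset_der (n : ℕ) : Pset.{u} (n+1) ⊆ der (Pset.{u} n) := by
  rintro x ⟨hdvd, h0⟩
  refine ⟨Pset_succ_subset n ⟨hdvd, h0⟩, ?_⟩
  rw [mem_closure_iff]
  intro U hUop hxU
  obtain ⟨t, htop, hteq⟩ := isOpen_induced_iff.mp hUop
  have hxt : x.1 ∈ t := by rw [← hteq] at hxU; exact hxU
  have hxlim : Order.IsSuccLimit x.1 := by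
    rw [isSuccLimit_iff_omega0_dvd]
    refine ⟨h0, dvd_trans ?_ hdvd⟩
    have h1n : (1 : Ordinal.{u}) ≤ ((n+1 : ℕ) : Ordinal.{u}) := by
      exact_mod_cast Nat.one_le_iff_ne_zero.mpr n.succ_ne_zero
    have h := opow_dvd_opow (ω : Ordinal.{u}) h1n
    rwa [opow_one] at h
  obtain ⟨a, ha, hsub⟩ := (Ordinal.isOpen_iff.mp htop) x.1 hxt hxlim
  -- construct y = ω^n * (a / ω^n + 1) ∈ (a, x)
  obtain ⟨d, hd⟩ := hdvd
  have hd0 : d ≠ 0 := by rintro rfl; simp at hd; exact h0 hd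
  set q := a / ω ^ (n : Ordinal.{u}) with hq
  set y : Ordinal.{u} := ω ^ (n : Ordinal.{u}) * (q + 1) with hy
  have hpos : (0:Ordinal.{u}) < ω ^ (n : Ordinal.{u}) := opow_pos _ omega0_pos
  have hay : a < y := by
    rw [hy]
    calc a < ω ^ (n : Ordinal.{u}) * q + ω ^ (n : Ordinal.{u}) := by
          conv_lhs => rw [← Ordinal.div_add_mod a (ω ^ (n : Ordinal.{u}))]
          exact add_lt_add_right (Ordinal.mod_lt a hpos.ne') _
      _ = ω ^ (n : Ordinal.{u}) * (q + 1) := by rw [mul_add, mul_one]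
  have hxval : x.1 = ω ^ (n : Ordinal.{u}) * (ω * d) := by
    rw [hd, omega_pow_succ, mul_assoc]
  have homega_d_limit : Order.IsSuccLimit (ω * d : Ordinal.{u}) := by
    rw [isSuccLimit_iff_omega0_dvd]
    exact ⟨mul_ne_zero omega0_ne_zero hd0, ⟨d, rfl⟩⟩
  have hq_lt : q < ω * d := by
    rw [hq, Ordinal.div_lt hpos.ne']
    rw [← hxval]
    exact ha
  have hyx : y < x.1 := by
    rw [hy, hxval]
    refine (mul_lt_mul_iff_right₀ hpos).mpr ?_
    rw [add_one_eq_succ]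
    exact homega_d_limit.succ_lt hq_lt
  have hyΩ : y < Om.{u} := lt_trans hyx x.2
  refine ⟨⟨y, hyΩ⟩, ?_, ⟨⟨q+1, rfl⟩, ?_⟩, ?_⟩
  · rw [← hteq]
    exact hsub ⟨hay, hyx⟩
  · exact (mul_pos hpos (by simp [lt_of_le_of_lt (zero_le (a := q)) (lt_succ q)] )).ne'
  · intro hmem
    rw [Set.mem_singleton_iff] at hmem
    have : y = x.1 := congrArg Subtype.val hmem
    exact absurd this hyx.ne

lemma Pset_subset_der_iter (n : ℕ) :
    Pset.{u} n ⊆ der^[n] (Set.univ : Set XXt.{u}) := by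
  induction n with
  | zero => exact fun x _ => trivial
  | succ n ih =>
    rw [Function.iterate_succ_apply']
    exact (Pset_succ_subset_der n).trans (der_mono ih)

end DivStructure

section Final

open Set Ordinal Order

universe u

lemma cb_nat (n : ℕ) :
    cbDeriv XXt.{u} (n : Ordinal.{0}) = der^[n] (Set.univ : Set XXt.{u}) := by
  induction n with
  | zero =>
    rw [Nat.cast_zero]
    unfold cbDeriv
    rw [Ordinal.limitRecOn_zero]
    rfl
  | succ n ih =>
    have hcast : ((n+1 : ℕ) : Ordinal.{0}) = Order.succ (n : Ordinal.{0}) := by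
      rw [Nat.cast_succ, add_one_eq_succ]
    rw [hcast]
    unfold cbDeriv
    rw [Ordinal.limitRecOn_succ, Function.iterate_succ_apply']
    show der (cbDeriv XXt.{u} (n : Ordinal.{0})) = _
    rw [ih]

lemma cb_omega_empty : cbDeriv XXt.{u} Ordinal.omega0 = ∅ := by
  unfold cbDeriv
  rw [Ordinal.limitRecOn_limit _ _ _ _ isSuccLimit_omega0]
  rw [Set.eq_empty_iff_forall_notMem]
  intro x hx
  obtain ⟨n, hn⟩ := lt_Omega_iff.mp x.2
  have hmem : x ∈ cbDeriv XXt.{u} (((n+1 : ℕ) : Ordinal.{0})) := by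
    have := Set.mem_iInter.mp hx ⟨((n+1 : ℕ) : Ordinal.{0}), nat_lt_omega0 (n+1)⟩
    exact this
  rw [cb_nat (n+1)] at hmem
  have hP : x ∈ Pset.{u} (n+1) := der_iter_univ_subset n hmem
  have hdvd : ω ^ (n : Ordinal.{u}) ∣ x.1 := (Pset_succ_subset n hP).1
  have := Ordinal.le_of_dvd hP.2 hdvd
  exact absurd hn (not_lt.mpr this)

lemma homog_of_discrete {Z : Type*} [TopologicalSpace Z] (S : Set Z)
    (h : DiscreteTopology ↥S) : HomogeneousSubspace S := fun x y =>
  letI : DecidableEq ↥S := Classical.decEq _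
  ⟨⟨Equiv.swap x y, continuous_of_discreteTopology, continuous_of_discreteTopology⟩,
    Equiv.swap_apply_left x y⟩

/-- the canonical countable decomposition into discrete pieces -/
def Yset : ℕ → Set XXt.{u}
  | 0 => {x | ¬ Order.IsSuccLimit x.1}
  | (n+1) => {x | ω ^ ((n+1 : ℕ) : Ordinal.{u}) ∣ x.1 ∧
      ¬ ω ^ ((n+2 : ℕ) : Ordinal.{u}) ∣ x.1 ∧ x.1 ≠ 0}

lemma discrete_Yset (n : ℕ) : DiscreteTopology ↥(Yset.{u} n) := by
  rw [discreteTopology_subtype_iff_isol]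
  intro x hx
  cases n with
  | zero =>
    refine ⟨{x}, (singleton_clopen hx).isOpen, rfl, fun y hy => hy.1⟩
  | succ n =>
    obtain ⟨h1, h2, h0⟩ := hx
    obtain ⟨U, hUop, hxU, hUM⟩ := iso_Mset h1 h2 h0
    exact ⟨U, hUop, hxU, fun y hy => hUM ⟨hy.1, hy.2.1⟩⟩

lemma Yset_cover : ⋃ n, Yset.{u} n = Set.univ := by
  classical
  rw [Set.eq_univ_iff_forall]
  intro x
  rw [Set.mem_iUnion]
  by_cases hlim : Order.IsSuccLimit x.1
  · have h0 : x.1 ≠ 0 := hlim.pos.ne'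
    have hex : ∃ n : ℕ, ¬ ω ^ ((n+1 : ℕ) : Ordinal.{u}) ∣ x.1 := by
      obtain ⟨n, hn⟩ := lt_Omega_iff.mp x.2
      refine ⟨n, fun hdvd => ?_⟩
      have hd : ω ^ (n : Ordinal.{u}) ∣ x.1 :=
        dvd_trans (opow_dvd_opow ω (by exact_mod_cast Nat.le_succ n)) hdvd
      exact absurd hn (not_lt.mpr (Ordinal.le_of_dvd h0 hd))
    set m := Nat.find hex with hm
    have hnm : ¬ ω ^ ((m+1 : ℕ) : Ordinal.{u}) ∣ x.1 := Nat.find_spec hex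
    cases hm' : m with
    | zero =>
      exfalso
      rw [hm'] at hnm
      apply hnm
      have h01 : ((0+1 : ℕ) : Ordinal.{u}) = 1 := by norm_num
      rw [h01, opow_one]
      exact (isSuccLimit_iff_omega0_dvd.mp hlim).2
    | succ k =>
      refine ⟨k+1, ?_, ?_, h0⟩
      · have hk : k < m := by rw [hm']; exact Nat.lt_succ_self k
        exact not_not.mp (Nat.find_min hex hk)
      · rw [hm'] at hnm
        exact hnm
  · exact ⟨0, hlim⟩

lemma sigmaHomog_XX : SigmaHomogeneous XXt.{u} :=
  ⟨Yset.{u}, fun n => homog_of_discrete _ (discrete_Yset n), Yset_cover⟩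

lemma homogSubspace_discrete (S : Set XXt.{u}) (h : HomogeneousSubspace S) :
    DiscreteTopology ↥S := by
  rw [discreteTopology_iff_isOpen_singleton]
  intro a
  -- the minimum of S is isolated
  obtain ⟨m, hmS, hmin⟩ := Ordinal.lt_wf.has_min (Subtype.val '' S)
    ⟨a.1.1, Set.mem_image_of_mem _ a.2⟩
  obtain ⟨x₀, hx₀S, hx₀⟩ := hmS
  have hx0iso : IsOpen ({⟨x₀, hx₀S⟩} : Set ↥S) := by
    rw [isOpen_induced_iff]
    refine ⟨Subtype.val ⁻¹' (Set.Iio (m + 1)), (isOpen_Iio).preimage continuous_subtype_val, ?_⟩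
    ext y
    simp only [Set.mem_preimage, Set.mem_singleton_iff, Set.mem_Iio]
    constructor
    · intro hy
      have hle : y.1.1 ≤ m := by
        rw [add_one_eq_succ] at hy
        exact lt_succ_iff.mp hy
      have : ¬ y.1.1 < m := hmin y.1.1 ⟨y.1, y.2, rfl⟩
      have heq : y.1.1 = m := le_antisymm hle (not_lt.mp this)
      exact Subtype.ext (Subtype.ext (heq.trans hx₀.symm))
    · intro hy
      rw [hy]
      show x₀.1 < m + 1
      rw [hx₀, add_one_eq_succ]
      exact lt_succ m
  obtain ⟨f, hf⟩ := h ⟨x₀, hx₀S⟩ a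
  have : ({a} : Set ↥S) = f '' {⟨x₀, hx₀S⟩} := by
    rw [Set.image_singleton, hf]
  rw [this]
  exact (Homeomorph.isOpen_image f).mpr hx0iso

lemma not_nhomog (l : ℕ) : ¬ NHomogeneous l XXt.{u} := by
  rintro ⟨Y, hY, hcov⟩
  have hempty : der^[l] (Set.univ : Set XXt.{u}) = ∅ := by
    refine der_iter_empty_of_cover l Set.univ Y ?_ (by rw [hcov])
    intro k
    rw [← discreteTopology_subtype_iff_isol]
    exact homogSubspace_discrete _ (hY k)
  have hP : (⟨ω ^ (l : Ordinal.{u}), opow_nat_lt l⟩ : XXt.{u}) ∈ Pset.{u} l :=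
    ⟨dvd_refl _, opow_ne_zero _ omega0_ne_zero⟩
  have := Pset_subset_der_iter l hP
  rw [hempty] at this
  exact this

end Final

/-- The ordinal `ω ^ ω` with the order topology is a zero-dimensional scattered separable
metrizable space that is σ-homogeneous but not `ℓ`-homogeneous for any finite `ℓ`. -/
theorem omega_pow_omega_sigma_homogeneous_not_finitely_homogeneous :
    ZeroDimensionalSpace ↥(Set.Iio (Ordinal.omega0 ^ Ordinal.omega0)) ∧
    ScatteredSpace ↥(Set.Iio (Ordinal.omega0 ^ Ordinal.omega0)) ∧
    SeparableSpace ↥(Set.Iio (Ordinal.omega0 ^ Ordinal.omega0)) ∧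
    MetrizableSpace ↥(Set.Iio (Ordinal.omega0 ^ Ordinal.omega0)) ∧
    SigmaHomogeneous ↥(Set.Iio (Ordinal.omega0 ^ Ordinal.omega0)) ∧
    ∀ ℓ : ℕ, ¬ NHomogeneous ℓ ↥(Set.Iio (Ordinal.omega0 ^ Ordinal.omega0)) := by
  refine ⟨zeroDim_XX, ⟨Ordinal.omega0, cb_omega_empty⟩, separable_XX, metrizable_XX,
    sigmaHomog_XX, not_nhomog⟩
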